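/- For f₀(z) = (1, 0, −√6 z², −2z³, −3z⁴) and g₀(z) = (0, 1, √6 z, 3z², 4z³) in ℂ⁵, one has ∂²/∂z∂z̄ log‖f₀ ∧ g₀‖² = 6/(1+|z|²)². -/

import Mathlib

open Complex Finset

/-- Wirtinger derivative ∂/∂z of a function ℂ → ℂ. -/
noncomputable def wdz (f : ℂ → ℂ) (z : ℂ) : ℂ :=
  (fderiv ℝ f z 1 - Complex.I * fderiv ℝ f z Complex.I) / 2

/-- Wirtinger derivative ∂/∂z̄ of a function ℂ → ℂ. -/
noncomputable def wdzbar (f : ℂ → ℂ) (z : ℂ) : ℂ :=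
  (fderiv ℝ f z 1 + Complex.I * fderiv ℝ f z Complex.I) / 2

/-- Square norm of the wedge of two vectors in ℂ⁵ (Cauchy–Binet):
`‖f ∧ g‖² = ‖f‖²‖g‖² − |⟨f,g⟩|²`. -/
noncomputable def wedgeNormSq (f g : Fin 5 → ℂ) : ℝ :=
  (∑ i, Complex.normSq (f i)) * (∑ i, Complex.normSq (g i)) -
    Complex.normSq (∑ i, f i * (starRingEnd ℂ) (g i))

lemma sqrt6_mul : ((Real.sqrt 6 : ℝ) : ℂ) * ((Real.sqrt 6 : ℝ) : ℂ) = 6 := by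
  rw [← Complex.ofReal_mul, Real.mul_self_sqrt (by norm_num)]; norm_num

lemma wedge_val (z : ℂ) :
    wedgeNormSq ![1, 0, -(Real.sqrt 6 : ℂ) * z ^ 2, -2 * z ^ 3, -3 * z ^ 4]
      ![0, 1, (Real.sqrt 6 : ℂ) * z, 3 * z ^ 2, 4 * z ^ 3]
      = (1 + Complex.normSq z) ^ 6 := by
  rw [← Complex.ofReal_inj]
  simp only [wedgeNormSq, Fin.sum_univ_five, Matrix.cons_val_zero, Matrix.cons_val_one,
    Matrix.head_cons, Matrix.cons_val_two, Matrix.tail_cons, Matrix.cons_val_three,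
    Matrix.cons_val_four]
  push_cast [← Complex.mul_conj]
  simp only [map_mul, map_pow, map_neg, map_one, map_zero, Complex.conj_conj, map_add,
    Complex.conj_ofReal, map_ofNat]
  have hs := sqrt6_mul
  linear_combination (z * (starRingEnd ℂ) z + (z * (starRingEnd ℂ) z)^2 +
    (z * (starRingEnd ℂ) z)^4 + (z * (starRingEnd ℂ) z)^5) * hs

lemma hasFDerivAt_N (z : ℂ) : HasFDerivAt (fun w : ℂ => 1 + Complex.normSq w)
    ((Complex.reCLM z • Complex.reCLM + Complex.reCLM z • Complex.reCLM) +
      (Complex.imCLM z • Complex.imCLM + Complex.imCLM z • Complex.imCLM)) z := by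
  have h1 := (Complex.reCLM.hasFDerivAt (x := z)).mul (Complex.reCLM.hasFDerivAt (x := z))
  have h2 := (Complex.imCLM.hasFDerivAt (x := z)).mul (Complex.imCLM.hasFDerivAt (x := z))
  exact (h1.add h2).const_add 1

lemma Npos (z : ℂ) : 0 < 1 + Complex.normSq z := by
  have := Complex.normSq_nonneg z; linarith

lemma wdz_log (z : ℂ) :
    wdz (fun w => ((6 * Real.log (1 + Complex.normSq w) : ℝ) : ℂ)) z
      = 6 * (starRingEnd ℂ) z / ((1 + Complex.normSq z : ℝ) : ℂ) := by
  have hne : (1 + Complex.normSq z) ≠ 0 := ne_of_gt (Npos z)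
  have hne' : (1 + (Complex.normSq z : ℂ)) ≠ 0 := by exact_mod_cast hne
  have hlog := (Real.hasDerivAt_log hne).comp_hasFDerivAt z (hasFDerivAt_N z)
  have h6 := hlog.const_mul (6 : ℝ)
  have hF : HasFDerivAt (fun w : ℂ => ((6 * Real.log (1 + Complex.normSq w) : ℝ) : ℂ))
      (Complex.ofRealCLM.comp ((6:ℝ) • (1 + Complex.normSq z)⁻¹ •
        ((Complex.reCLM z • Complex.reCLM + Complex.reCLM z • Complex.reCLM) +
          (Complex.imCLM z • Complex.imCLM + Complex.imCLM z • Complex.imCLM)))) z :=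
    Complex.ofRealCLM.hasFDerivAt.comp z h6
  rw [wdz, hF.fderiv]
  simp only [ContinuousLinearMap.comp_apply, ContinuousLinearMap.smul_apply,
    ContinuousLinearMap.add_apply, Complex.reCLM_apply, Complex.imCLM_apply,
    Complex.one_re, Complex.one_im, Complex.I_re, Complex.I_im, Complex.ofRealCLM_apply,
    smul_eq_mul, mul_zero, mul_one, add_zero, zero_add]
  push_cast
  rw [div_eq_div_iff (by norm_num) hne']
  field_simp
  rw [Complex.ext_iff]
  constructor <;> simp [Complex.normSq_apply] <;> ring

lemma wdzbar_G (z : ℂ) :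
    wdzbar (fun w => 6 * (starRingEnd ℂ) w / ((1 + Complex.normSq w : ℝ) : ℂ)) z
      = ((6 / (1 + Complex.normSq z) ^ 2 : ℝ) : ℂ) := by
  have hne : (1 + Complex.normSq z) ≠ 0 := ne_of_gt (Npos z)
  have hne' : ((1 + Complex.normSq z : ℝ) : ℂ) ≠ 0 := by
    rw [Ne, Complex.ofReal_eq_zero]; exact hne
  have hne'' : (1 + (Complex.normSq z : ℂ)) ≠ 0 := by exact_mod_cast hne
  have hnum : HasFDerivAt (fun w : ℂ => 6 * (starRingEnd ℂ) w)
      ((6 : ℂ) • (Complex.conjCLE : ℂ →L[ℝ] ℂ)) z :=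
    ((Complex.conjCLE : ℂ →L[ℝ] ℂ).hasFDerivAt (x := z)).const_mul (6 : ℂ)
  have hden : HasFDerivAt (fun w : ℂ => ((1 + Complex.normSq w : ℝ) : ℂ))
      (Complex.ofRealCLM.comp
        ((Complex.reCLM z • Complex.reCLM + Complex.reCLM z • Complex.reCLM) +
          (Complex.imCLM z • Complex.imCLM + Complex.imCLM z • Complex.imCLM))) z :=
    Complex.ofRealCLM.hasFDerivAt.comp z (hasFDerivAt_N z)
  have hinv := (hasFDerivAt_inv' (𝕜 := ℝ) (R := ℂ) hne').comp z hden
  have hG := hnum.mul hinv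
  have hfun : (fun w : ℂ => 6 * (starRingEnd ℂ) w / ((1 + Complex.normSq w : ℝ) : ℂ))
      = fun y : ℂ => 6 * (starRingEnd ℂ) y *
          (Inv.inv ∘ fun w : ℂ => ((1 + Complex.normSq w : ℝ) : ℂ)) y := by
    funext w; simp [div_eq_mul_inv]
  rw [wdzbar, hfun, HasFDerivAt.fderiv (f := fun y : ℂ => 6 * (starRingEnd ℂ) y *
      (Inv.inv ∘ fun w : ℂ => ((1 + Complex.normSq w : ℝ) : ℂ)) y) hG]
  simp only [ContinuousLinearMap.add_apply, ContinuousLinearMap.smul_apply,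
    ContinuousLinearMap.comp_apply, ContinuousLinearMap.neg_apply,
    ContinuousLinearMap.mulLeftRight_apply, Complex.reCLM_apply, Complex.imCLM_apply,
    Complex.one_re, Complex.one_im, Complex.I_re, Complex.I_im, Complex.ofRealCLM_apply,
    Complex.conjCLE_apply, ContinuousLinearMap.coe_coe, ContinuousLinearEquiv.coe_coe,
    map_one, Complex.conj_I, smul_eq_mul, Function.comp_apply,
    mul_zero, mul_one, add_zero, zero_add]
  push_cast
  have hc : (starRingEnd ℂ) z = (z.re : ℂ) - (z.im : ℂ) * Complex.I := by
    simp [Complex.ext_iff]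
  have hn : ((Complex.normSq z : ℝ) : ℂ) = (z.re : ℂ) ^ 2 + (z.im : ℂ) ^ 2 := by
    rw [Complex.normSq_apply]; push_cast; ring
  have hS : ((1 : ℂ) + ((z.re : ℂ) ^ 2 + (z.im : ℂ) ^ 2)) ≠ 0 := by
    rw [← hn]; exact_mod_cast hne
  rw [hc, hn]
  field_simp
  ring_nf
  simp [Complex.I_sq]
  ring

/-- For `f₀ = (1,0,−√6 z²,−2z³,−3z⁴)` and `g₀ = (0,1,√6 z,3z²,4z³)`:
`∂²/∂z∂z̄ log‖f₀∧g₀‖² = 6/(1+|z|²)²`. -/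
theorem wedge_gamma0_degree_six :
    let f₀ : ℂ → Fin 5 → ℂ := fun z =>
      ![1, 0, -(Real.sqrt 6 : ℂ) * z ^ 2, -2 * z ^ 3, -3 * z ^ 4]
    let g₀ : ℂ → Fin 5 → ℂ := fun z =>
      ![0, 1, (Real.sqrt 6 : ℂ) * z, 3 * z ^ 2, 4 * z ^ 3]
    ∀ z : ℂ,
      wdzbar (wdz (fun w => (Real.log (wedgeNormSq (f₀ w) (g₀ w)) : ℂ))) z =
        ((6 / (1 + Complex.normSq z) ^ 2 : ℝ) : ℂ) := by
  intro f₀ g₀ z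
  have hfun : (fun w => ((Real.log (wedgeNormSq (f₀ w) (g₀ w)) : ℝ) : ℂ))
      = fun w => ((6 * Real.log (1 + Complex.normSq w) : ℝ) : ℂ) := by
    funext w
    simp only [f₀, g₀]
    rw [wedge_val, Real.log_pow]
    push_cast; ring_nf
  rw [hfun]
  have hwdz : (wdz fun w => ((6 * Real.log (1 + Complex.normSq w) : ℝ) : ℂ))
      = fun w => 6 * (starRingEnd ℂ) w / ((1 + Complex.normSq w : ℝ) : ℂ) := by
    funext w; exact wdz_log w
  rw [hwdz]
  exact wdzbar_G z
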